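/- arXiv:1001.0472 — 4 statements merged into one kernel-verified Lean document; each statement's English description precedes it below -/
import Mathlib

section
/- For every prime ideal Q of B not containing J, the set Q̄^f := {(a, f(a)+j) | a ∈ A, j ∈ J, f(a)+j ∈ Q} is a prime ideal of A ⋈^f J not containing {0} × J. -/
variable {A B : Type*} [CommRing A] [CommRing B]

/-- The amalgamation `A ⋈^f J = {(a, f a + j) | a ∈ A, j ∈ J}` as a subring of `A × B`. -/
def amalg (f : A →+* B) (J : Ideal B) : Subring (A × B) where
  carrier := {p : A × B | ∃ a : A, ∃ j ∈ J, p = (a, f a + j)}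
  zero_mem' := ⟨0, 0, J.zero_mem, by ext <;> simp⟩
  one_mem' := ⟨1, 0, J.zero_mem, by ext <;> simp⟩
  add_mem' := by
    rintro _ _ ⟨a, j, hj, rfl⟩ ⟨a', j', hj', rfl⟩
    exact ⟨a + a', j + j', J.add_mem hj hj', by simp [Prod.ext_iff]; ring⟩
  neg_mem' := by
    rintro _ ⟨a, j, hj, rfl⟩
    exact ⟨-a, -j, J.neg_mem hj, by simp [Prod.ext_iff]; ring⟩
  mul_mem' := by
    rintro _ _ ⟨a, j, hj, rfl⟩ ⟨a', j', hj', rfl⟩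
    refine ⟨a * a', f a * j' + j * f a' + j * j', ?_, by simp [Prod.ext_iff]; ring⟩
    exact J.add_mem (J.add_mem (J.mul_mem_left _ hj') (J.mul_mem_right _ hj))
      (J.mul_mem_right _ hj)

/-- The subring `f(A) + J` of `B`. -/
def fAJ (f : A →+* B) (J : Ideal B) : Subring B where
  carrier := {b : B | ∃ a : A, ∃ j ∈ J, b = f a + j}
  zero_mem' := ⟨0, 0, J.zero_mem, by simp⟩
  one_mem' := ⟨1, 0, J.zero_mem, by simp⟩
  add_mem' := by
    rintro _ _ ⟨a, j, hj, rfl⟩ ⟨a', j', hj', rfl⟩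
    exact ⟨a + a', j + j', J.add_mem hj hj', by simp; ring⟩
  neg_mem' := by
    rintro _ ⟨a, j, hj, rfl⟩
    exact ⟨-a, -j, J.neg_mem hj, by simp; ring⟩
  mul_mem' := by
    rintro _ _ ⟨a, j, hj, rfl⟩ ⟨a', j', hj', rfl⟩
    refine ⟨a * a', f a * j' + j * f a' + j * j', ?_, by simp; ring⟩
    exact J.add_mem (J.add_mem (J.mul_mem_left _ hj') (J.mul_mem_right _ hj))
      (J.mul_mem_right _ hj)

/-- For every prime ideal `Q` of `B` not containing `J`, the set
`Q̄^f = {(a, f a + j) | a ∈ A, j ∈ J, f a + j ∈ Q}` is a prime ideal of `A ⋈^f J`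
not containing `{0} × J`. -/
theorem amalg_prime_of_prime_B (f : A →+* B) (J : Ideal B) (Q : Ideal B) (hQ : Q.IsPrime)
    (hJQ : ¬ J ≤ Q) :
    ∃ K : Ideal (amalg f J),
      (K : Set (amalg f J)) =
        {x : amalg f J | ∃ a : A, ∃ j ∈ J, f a + j ∈ Q ∧ (x : A × B) = (a, f a + j)} ∧
      K.IsPrime ∧
      ¬ {x : amalg f J | ∃ j ∈ J, (x : A × B) = (0, j)} ⊆ (K : Set (amalg f J)) := by

  classical
  obtain ⟨j0, hj0J, hj0Q⟩ := Set.not_subset.mp hJQ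
  let g : amalg f J →+* B := (RingHom.snd A B).comp (amalg f J).subtype
  refine ⟨Q.comap g, ?_, Ideal.comap_isPrime g Q, ?_⟩
  · ext x
    obtain ⟨x, a, j, hj, hx⟩ := x
    simp only [SetLike.mem_coe, Ideal.mem_comap, Set.mem_setOf_eq]
    constructor
    · intro hxQ
      refine ⟨a, j, hj, ?_, hx⟩
      have : g ⟨x, a, j, hj, hx⟩ = f a + j := by simp [g, hx]
      rwa [this] at hxQ
    · rintro ⟨a', j', hj', hQ', hx'⟩
      have : g ⟨x, a, j, hj, hx⟩ = f a' + j' := by simp [g, hx']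
      rwa [this]
  · intro hsub
    have hmem : (⟨(0, j0), 0, j0, hj0J, by simp⟩ : amalg f J) ∈
        {x : amalg f J | ∃ j ∈ J, (x : A × B) = (0, j)} := ⟨j0, hj0J, rfl⟩
    have := hsub hmem
    simp only [SetLike.mem_coe, Ideal.mem_comap] at this
    exact hj0Q this
end

section
/- For a prime ideal P of A, the ideal P ⋈^f J is a maximal ideal of A ⋈^f J if and only if P is a maximal ideal of A. -/
variable {A B : Type*} [CommRing A] [CommRing B]

/-- For a prime ideal `P` of `A`, the ideal `P ⋈^f J` is maximal in `A ⋈^f J` iff `P` is maximal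
in `A`. -/
theorem amalg_maximal_iff (f : A →+* B) (J : Ideal B) (P : Ideal A) (hP : P.IsPrime)
    (K : Ideal (amalg f J))
    (hK : (K : Set (amalg f J)) =
      {x : amalg f J | ∃ p ∈ P, ∃ j ∈ J, (x : A × B) = (p, f p + j)}) :
    K.IsMaximal ↔ P.IsMaximal := by
  set π : amalg f J →+* A := (RingHom.fst A B).comp (amalg f J).subtype with hπ
  have hsurj : Function.Surjective π := fun a =>
    ⟨⟨(a, f a), a, 0, J.zero_mem, by simp⟩, rfl⟩
  have hKP : K = Ideal.comap π P := by
    ext x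
    have hx : x ∈ K ↔ x ∈ (K : Set (amalg f J)) := Iff.rfl
    rw [hx, hK]
    constructor
    · rintro ⟨p, hp, j, hj, hxe⟩
      show (x : A × B).1 ∈ P
      rw [hxe]
      exact hp
    · intro hx1
      obtain ⟨a, j, hj, he⟩ := x.2
      refine ⟨a, ?_, j, hj, he⟩
      have : (x : A × B).1 ∈ P := hx1
      rwa [he] at this
  constructor
  · intro hKm
    have hmap : Ideal.map π K = P := by
      rw [hKP, Ideal.map_comap_of_surjective π hsurj]
    rcases Ideal.map_eq_top_or_isMaximal_of_surjective π hsurj hKm with h | h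
    · exact absurd (hmap ▸ h) hP.ne_top
    · exact hmap ▸ h
  · intro hPm
    rw [hKP]
    exact Ideal.comap_isMaximal_of_surjective π hsurj
end

section
/- The ideal f⁻¹(J) × J is the conductor of A ⋈^f J in A × B, i.e., it is the largest ideal of A × B contained in A ⋈^f J. -/
variable {A B : Type*} [CommRing A] [CommRing B]

/-- `f⁻¹(J) × J` is the conductor of `A ⋈^f J` in `A × B`: it is the largest ideal of `A × B`
contained in `A ⋈^f J`. -/
theorem amalg_conductor (f : A →+* B) (J : Ideal B) :
    ∃ C : Ideal (A × B),
      (C : Set (A × B)) = (f ⁻¹' (J : Set B)) ×ˢ (J : Set B) ∧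
      (C : Set (A × B)) ⊆ (amalg f J : Set (A × B)) ∧
      ∀ I : Ideal (A × B), (I : Set (A × B)) ⊆ (amalg f J : Set (A × B)) → I ≤ C := by
  refine ⟨(J.comap f).prod J, ?_, ?_, ?_⟩
  · ext ⟨a, b⟩
    simp [Ideal.mem_prod, Set.mem_prod, Ideal.mem_comap]
  · rintro ⟨a, b⟩ hab
    rw [SetLike.mem_coe, Ideal.mem_prod] at hab
    obtain ⟨ha, hb⟩ := hab
    rw [Ideal.mem_comap] at ha
    exact ⟨a, b - f a, J.sub_mem hb ha, by simp⟩
  · intro I hI ⟨a, b⟩ hab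
    have h1 : ((0 : A), b) ∈ I := by
      have := I.mul_mem_left (0, 1) hab
      simpa using this
    obtain ⟨a', j', hj', heq⟩ := hI h1
    have ha' : a' = 0 := ((Prod.ext_iff.mp heq).1).symm
    have hb : b ∈ J := by
      have := (Prod.ext_iff.mp heq).2
      rw [ha'] at this; simp at this; rw [this]; exact hj'
    obtain ⟨a'', j'', hj'', heq2⟩ := hI hab
    have ha'' : a'' = a := ((Prod.ext_iff.mp heq2).1).symm
    have hfb : b = f a + j'' := by
      rw [← ha'']; exact (Prod.ext_iff.mp heq2).2
    rw [Ideal.mem_prod]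
    refine ⟨Ideal.mem_comap.mpr ?_, hb⟩
    have : f a = b - j'' := by rw [hfb]; ring
    rw [this]; exact J.sub_mem hb hj''
end

section
/- The subring f(A)+J of B is integral over f(A) if and only if A ⋈^f J is integral over its subring Γ(f) := {(a, f(a)) | a ∈ A}. -/
variable {A B : Type*} [CommRing A] [CommRing B]

/-- `f(A)+J` is integral over `f(A)` iff `A ⋈^f J` is integral over `Γ(f) = {(a, f a) | a ∈ A}`. -/
theorem amalg_integral_iff (f : A →+* B) (J : Ideal B) (ι : A →+* amalg f J)
    (hι : ∀ a : A, (ι a : A × B) = (a, f a)) :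
    (∀ b ∈ fAJ f J, f.IsIntegralElem b) ↔ (∀ x : amalg f J, ι.IsIntegralElem x) := by
  classical
  set g : amalg f J →+* A × B := (amalg f J).subtype with hg
  have hfst : (RingHom.fst A B).comp (g.comp ι) = RingHom.id A := by
    ext a; simpa [hg] using congrArg Prod.fst (hι a)
  have hsnd : (RingHom.snd A B).comp (g.comp ι) = f := by
    ext a; simpa [hg] using congrArg Prod.snd (hι a)
  constructor
  · intro H x
    obtain ⟨a, j, hj, hx⟩ := x.2
    obtain ⟨q, hq, hq0⟩ := H (f a + j) ⟨a, j, hj, rfl⟩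
    refine ⟨q * (Polynomial.X - Polynomial.C a), hq.mul (Polynomial.monic_X_sub_C a), ?_⟩
    have hinj : Function.Injective g := Subtype.coe_injective
    apply hinj
    rw [Polynomial.hom_eval₂, map_zero]
    have hxc : (g x : A × B) = (a, f a + j) := hx
    rw [hxc]
    have h1 : (RingHom.fst A B) (Polynomial.eval₂ (g.comp ι) (a, f a + j)
        (q * (Polynomial.X - Polynomial.C a))) = 0 := by
      rw [Polynomial.hom_eval₂, hfst]
      simp [Polynomial.eval₂_mul, Polynomial.eval₂_sub]
    have h2 : (RingHom.snd A B) (Polynomial.eval₂ (g.comp ι) (a, f a + j)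
        (q * (Polynomial.X - Polynomial.C a))) = 0 := by
      rw [Polynomial.hom_eval₂, hsnd]
      simp [Polynomial.eval₂_mul, Polynomial.eval₂_sub, hq0]
    exact Prod.ext h1 h2
  · rintro H b ⟨a, j, hj, rfl⟩
    obtain ⟨p, hp, hp0⟩ := H ⟨(a, f a + j), ⟨a, j, hj, rfl⟩⟩
    refine ⟨p, hp, ?_⟩
    have := congrArg (RingHom.snd A B ∘ g) hp0
    simp only [Function.comp_apply, map_zero] at this
    rw [Polynomial.hom_eval₂, Polynomial.hom_eval₂, hsnd] at this
    simpa [hg] using this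
end
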